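/- Let f(x) be a monic irreducible polynomial of degree d over F_{p^m}, K = F_{p^m}[x]/⟨f(x)^{p^s}⟩. The number of K-submodules of K² (linear codes over K of length 2) equals Σ_{j=0}^{p^s} (2j+1) p^{m(p^s−j)d}. -/

import Mathlib

open Polynomial

set_option synthInstance.maxHeartbeats 1000000
set_option maxHeartbeats 1000000

namespace Stmt11Aux

variable {F : Type} [Field F] {f : F[X]} {n : ℕ}

local notation "π" => Ideal.Quotient.mk (Ideal.span {f ^ n})
local notation "R" => F[X] ⧸ Ideal.span ({f ^ n} : Set F[X])

theorem mk_eq_zero_iff (h : F[X]) : π h = 0 ↔ f ^ n ∣ h := by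
  rw [Ideal.Quotient.eq_zero_iff_mem, Ideal.mem_span_singleton]

theorem mem_span_pow {k : ℕ} (hk : k ≤ n) (h : F[X]) :
    π h ∈ Ideal.span {π (f ^ k)} ↔ f ^ k ∣ h := by
  rw [Ideal.mem_span_singleton]
  constructor
  · rintro ⟨r, hr⟩
    obtain ⟨r₀, rfl⟩ := Ideal.Quotient.mk_surjective r
    have h2 : π (h - f ^ k * r₀) = 0 := by rw [map_sub, map_mul, hr, sub_self]
    rw [mk_eq_zero_iff] at h2
    obtain ⟨w, hw⟩ := h2
    have h3 : h = f ^ k * r₀ + f ^ n * w := by linear_combination hw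
    rw [h3]
    exact dvd_add (Dvd.intro _ rfl) ((pow_dvd_pow f hk).mul_right _)
  · rintro ⟨r, rfl⟩
    exact ⟨π r, (map_mul _ _ _)⟩

theorem key_dvd {a b : ℕ} (ha : a ≤ n) {e c : F[X]}
    (he : f ^ (n - a) ∣ e) (hc : f ^ (a + b - n) ∣ c) : f ^ b ∣ e * c := by
  have h1 : f ^ b ∣ f ^ ((n - a) + (a + b - n)) := pow_dvd_pow f (by omega)
  exact h1.trans (by rw [pow_add]; exact mul_dvd_mul he hc)

theorem dvd_of_mk_mul_eq_zero (hf0 : f ≠ 0) {a : ℕ} (ha : a ≤ n) {r₀ : F[X]}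
    (h : π (r₀ * f ^ a) = 0) : f ^ (n - a) ∣ r₀ := by
  rw [mk_eq_zero_iff] at h
  have h2 : f ^ (n - a) * f ^ a ∣ r₀ * f ^ a := by
    rw [← pow_add]
    have h3 : n - a + a = n := by omega
    rw [h3]; exact h
  exact (mul_dvd_mul_iff_right (pow_ne_zero a hf0)).mp h2


end Stmt11Aux

noncomputable def Stmt11Aux.stdMod {F : Type} [Field F] (f : F[X]) (n : ℕ) (a b : ℕ) (c : F[X]) :
    Submodule (F[X] ⧸ Ideal.span {f ^ n}) ((F[X] ⧸ Ideal.span {f ^ n}) × (F[X] ⧸ Ideal.span {f ^ n})) :=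
  Submodule.span _ {(Ideal.Quotient.mk _ (f ^ a), Ideal.Quotient.mk _ c),
    ((0 : F[X] ⧸ Ideal.span {f ^ n}), Ideal.Quotient.mk _ (f ^ b))}

namespace Stmt11Aux

variable {F : Type} [Field F] {f : F[X]} {n : ℕ}

local notation "π" => Ideal.Quotient.mk (Ideal.span {f ^ n})
local notation "R" => F[X] ⧸ Ideal.span ({f ^ n} : Set F[X])

theorem map_fst_stdMod (a b : ℕ) (c : F[X]) :
    Submodule.map (LinearMap.fst R R R) (stdMod f n a b c) = Ideal.span {π (f ^ a)} := by
  rw [stdMod, Submodule.map_span, Set.image_insert_eq, Set.image_singleton]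
  simp only [LinearMap.fst_apply]
  rw [Set.pair_comm]
  exact Submodule.span_insert_zero


theorem ideal_classify (hirr : Irreducible f) (I : Ideal (F[X] ⧸ Ideal.span {f ^ n})) :
    ∃ k ≤ n, I = Ideal.span {π (f ^ k)} := by
  obtain ⟨g, hg⟩ := IsPrincipalIdealRing.principal (I.comap π)
  have hfn : f ^ n ∈ I.comap π := by
    simp [Ideal.mem_comap, (mk_eq_zero_iff (f ^ n)).mpr dvd_rfl]
  rw [hg, Ideal.submodule_span_eq] at hfn
  have hdvd : g ∣ f ^ n := Ideal.mem_span_singleton.mp hfn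
  obtain ⟨k, hk, hassoc⟩ := (dvd_prime_pow hirr.prime n).mp hdvd
  refine ⟨k, hk, ?_⟩
  have hmap : Ideal.map π (I.comap π) = I :=
    Ideal.map_comap_of_surjective π Ideal.Quotient.mk_surjective I
  rw [← hmap, hg, Ideal.submodule_span_eq,
    Ideal.span_singleton_eq_span_singleton.mpr hassoc, Ideal.map_span]
  simp

theorem span_pow_injective (hirr : Irreducible f) {k k' : ℕ} (hk : k ≤ n) (hk' : k' ≤ n)
    (h : (Ideal.span {π (f ^ k)} : Ideal _) = Ideal.span {π (f ^ k')}) : k = k' := by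
  have h1 : f ^ k' ∣ f ^ k := by
    rw [← mem_span_pow hk', ← h]; exact Ideal.subset_span rfl
  have h2 : f ^ k ∣ f ^ k' := by
    rw [← mem_span_pow hk, h]; exact Ideal.subset_span rfl
  have hf0 : f ≠ 0 := hirr.ne_zero
  have hfu : ¬IsUnit f := hirr.not_isUnit
  have := (pow_dvd_pow_iff hf0 hfu).mp h1
  have := (pow_dvd_pow_iff hf0 hfu).mp h2
  omega

theorem comap_inr_stdMod (hf0 : f ≠ 0) {a b : ℕ} (ha : a ≤ n) (hb : b ≤ n) {c : F[X]}
    (hc : f ^ (a + b - n) ∣ c) :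
    Submodule.comap (LinearMap.inr R R R) (stdMod f n a b c) = Ideal.span {π (f ^ b)} := by
  apply le_antisymm
  · intro z hz
    rw [Submodule.mem_comap, stdMod, Submodule.mem_span_pair] at hz
    obtain ⟨r, w, hrw⟩ := hz
    obtain ⟨r₀, rfl⟩ := Ideal.Quotient.mk_surjective r
    obtain ⟨w₀, rfl⟩ := Ideal.Quotient.mk_surjective w
    have h1 : π (r₀ * f ^ a) = 0 := by
      have h := congrArg Prod.fst hrw
      simpa [smul_eq_mul] using h
    have h2 : π (r₀ * c) + π w₀ * π (f ^ b) = z := by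
      have h := congrArg Prod.snd hrw
      simpa [smul_eq_mul] using h
    have h3 : f ^ (n - a) ∣ r₀ := dvd_of_mk_mul_eq_zero hf0 ha h1
    have h4 : f ^ b ∣ r₀ * c := key_dvd ha h3 hc
    rw [← h2]
    exact Ideal.add_mem _ ((mem_span_pow hb _).mpr h4)
      (Ideal.mul_mem_left _ _ (Ideal.subset_span rfl))
  · rw [Ideal.span_le, Set.singleton_subset_iff]
    show π (f ^ b) ∈ Submodule.comap _ _
    rw [Submodule.mem_comap]
    exact Submodule.subset_span (by simp)

theorem sub_dvd_of_mem_stdMod (hf0 : f ≠ 0) {a b : ℕ} (ha : a ≤ n) (hb : b ≤ n) {c c' : F[X]}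
    (hc' : f ^ (a + b - n) ∣ c')
    (hmem : ((π (f ^ a) : R), π c) ∈ stdMod f n a b c') : f ^ b ∣ c - c' := by
  rw [stdMod, Submodule.mem_span_pair] at hmem
  obtain ⟨r, w, hrw⟩ := hmem
  obtain ⟨r₀, rfl⟩ := Ideal.Quotient.mk_surjective r
  obtain ⟨w₀, rfl⟩ := Ideal.Quotient.mk_surjective w
  have h1 : π ((r₀ - 1) * f ^ a) = 0 := by
    have h := congrArg Prod.fst hrw
    simp only [Prod.fst_add, Prod.smul_fst, smul_eq_mul, mul_zero] at h
    rw [← map_mul, add_zero] at h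
    have he : (r₀ - 1) * f ^ a = r₀ * f ^ a - f ^ a := by ring
    rw [he, map_sub, h, sub_self]
  have h3 : f ^ (n - a) ∣ r₀ - 1 := dvd_of_mk_mul_eq_zero hf0 ha h1
  have h2 : π (c - r₀ * c') ∈ Ideal.span {π (f ^ b)} := by
    have h := congrArg Prod.snd hrw
    simp only [Prod.snd_add, Prod.smul_snd, smul_eq_mul] at h
    have : π (c - r₀ * c') = π w₀ * π (f ^ b) := by
      rw [map_sub, map_mul, ← h]; ring
    rw [this]
    exact Ideal.mul_mem_left _ _ (Ideal.subset_span rfl)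
  have h4 : f ^ b ∣ c - r₀ * c' := (mem_span_pow hb _).mp h2
  have h5 : f ^ b ∣ (r₀ - 1) * c' := key_dvd ha h3 hc'
  have h6 : c - c' = (c - r₀ * c') + (r₀ - 1) * c' := by ring
  rw [h6]
  exact dvd_add h4 h5

theorem stdMod_shift_le (a b : ℕ) (c q : F[X]) :
    stdMod f n a b (c + f ^ b * q) ≤ stdMod f n a b c := by
  rw [stdMod, Submodule.span_le]
  rintro x (rfl | rfl)
  · rw [stdMod, SetLike.mem_coe, Submodule.mem_span_pair]
    refine ⟨1, π q, ?_⟩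
    have he : (c + f ^ b * q) = c + q * f ^ b := by ring
    rw [he, one_smul, Prod.smul_mk, smul_eq_mul, smul_eq_mul, Prod.mk_add_mk, mul_zero,
      add_zero, map_add, map_mul]
  · exact Submodule.subset_span (by simp)

theorem stdMod_shift (a b : ℕ) (c q : F[X]) :
    stdMod f n a b (c + f ^ b * q) = stdMod f n a b c := by
  apply le_antisymm (stdMod_shift_le a b c q)
  have h := stdMod_shift_le (f := f) (n := n) a b (c + f ^ b * q) (-q)
  simpa using h


theorem degree_pow_monic (hmon : f.Monic) (k : ℕ) :
    (f ^ k).degree = ((k * f.natDegree : ℕ) : WithBot ℕ) := by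
  rw [degree_eq_natDegree (hmon.pow k).ne_zero, natDegree_pow]

theorem exists_params (hmon : f.Monic) (hirr : Irreducible f)
    (M : Submodule R (R × R)) :
    ∃ a ≤ n, ∃ b ≤ n, ∃ c : F[X], f ^ (a + b - n) ∣ c ∧
      c.degree < ((b * f.natDegree : ℕ) : WithBot ℕ) ∧ M = stdMod f n a b c := by
  have hf0 : f ≠ 0 := hirr.ne_zero
  obtain ⟨a, ha, hIa⟩ := ideal_classify hirr (Submodule.map (LinearMap.fst R R R) M)
  obtain ⟨b, hb, hIb⟩ := ideal_classify hirr (Submodule.comap (LinearMap.inr R R R) M)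
  have hmem : π (f ^ a) ∈ Submodule.map (LinearMap.fst R R R) M := by
    rw [hIa]; exact Ideal.subset_span rfl
  rw [Submodule.mem_map] at hmem
  obtain ⟨xy, hxyM, hx⟩ := hmem
  obtain ⟨c₀, hc₀⟩ := Ideal.Quotient.mk_surjective xy.2
  have hxy : xy = (π (f ^ a), π c₀) := by
    obtain ⟨x1, x2⟩ := xy
    simp only [LinearMap.fst_apply] at hx
    simp only at hc₀ ⊢
    rw [hx, hc₀]
  rw [hxy] at hxyM
  have hA : M = stdMod f n a b c₀ := by
    apply le_antisymm
    · intro z hz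
      have hz1 : z.1 ∈ Ideal.span {π (f ^ a)} := by
        rw [← hIa]; exact ⟨z, hz, rfl⟩
      obtain ⟨r, hr⟩ := Ideal.mem_span_singleton.mp hz1
      have hinr : (LinearMap.inr R R R) (z.2 - r * π c₀) = z - r • (π (f ^ a), π c₀) := by
        have : z = (z.1, z.2) := rfl
        rw [this, Prod.smul_mk, smul_eq_mul, smul_eq_mul, Prod.mk_sub_mk, LinearMap.inr_apply]
        rw [hr]
        simp [mul_comm]
      have hz2 : z.2 - r * π c₀ ∈ Ideal.span {π (f ^ b)} := by
        rw [← hIb, Submodule.mem_comap, hinr]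
        exact Submodule.sub_mem _ hz (Submodule.smul_mem _ r hxyM)
      obtain ⟨w, hw⟩ := Ideal.mem_span_singleton.mp hz2
      rw [stdMod, Submodule.mem_span_pair]
      refine ⟨r, w, ?_⟩
      have : z = (z.1, z.2) := rfl
      rw [this, Prod.smul_mk, Prod.smul_mk, smul_eq_mul, smul_eq_mul, smul_eq_mul, smul_eq_mul,
        Prod.mk_add_mk, Prod.mk.injEq]
      constructor
      · rw [hr]; ring
      · linear_combination -hw
    · rw [stdMod, Submodule.span_le]
      rintro x (rfl | rfl)
      · exact hxyM
      · show (LinearMap.inr R R R) (π (f ^ b)) ∈ M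
        have : π (f ^ b) ∈ Submodule.comap (LinearMap.inr R R R) M := by
          rw [hIb]; exact Ideal.subset_span rfl
        exact this
  have hB : f ^ (a + b - n) ∣ c₀ := by
    rcases le_or_gt (a + b) n with hab | hab
    · have : a + b - n = 0 := by omega
      rw [this, pow_zero]; exact one_dvd _
    · have hsm : (π (f ^ (n - a))) • ((π (f ^ a) : R), π c₀) =
          (LinearMap.inr R R R) (π (f ^ (n - a) * c₀)) := by
        rw [Prod.smul_mk, smul_eq_mul, smul_eq_mul, LinearMap.inr_apply, ← map_mul, ← map_mul,
          ← pow_add]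
        have h1 : n - a + a = n := by omega
        rw [h1, (mk_eq_zero_iff (f ^ n)).mpr dvd_rfl]
      have hmem2 : π (f ^ (n - a) * c₀) ∈ Ideal.span {π (f ^ b)} := by
        rw [← hIb, Submodule.mem_comap, ← hsm]
        exact Submodule.smul_mem _ _ hxyM
      have hdvd : f ^ b ∣ f ^ (n - a) * c₀ := (mem_span_pow hb _).mp hmem2
      have h2 : f ^ (n - a) * f ^ (a + b - n) ∣ f ^ (n - a) * c₀ := by
        rw [← pow_add]
        have h3 : n - a + (a + b - n) = b := by omega
        rw [h3]; exact hdvd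
      exact (mul_dvd_mul_iff_left (pow_ne_zero _ hf0)).mp h2
  refine ⟨a, ha, b, hb, c₀ %ₘ f ^ b, ?_, ?_, ?_⟩
  · rw [modByMonic_eq_sub_mul_div c₀ (f ^ b)]
    exact dvd_sub hB ((pow_dvd_pow f (by omega)).mul_right _)
  · rw [← degree_pow_monic hmon b]
    exact degree_modByMonic_lt c₀ (hmon.pow b)
  · rw [hA]
    have heq : c₀ %ₘ f ^ b + f ^ b * (c₀ /ₘ f ^ b) = c₀ := modByMonic_add_div c₀ (f ^ b)
    calc stdMod f n a b c₀ = stdMod f n a b (c₀ %ₘ f ^ b + f ^ b * (c₀ /ₘ f ^ b)) := by rw [heq]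
      _ = stdMod f n a b (c₀ %ₘ f ^ b) := stdMod_shift a b _ _

theorem params_inj (hmon : f.Monic) (hirr : Irreducible f)
    {a b a' b' : ℕ} {c c' : F[X]} (ha : a ≤ n) (hb : b ≤ n) (ha' : a' ≤ n) (hb' : b' ≤ n)
    (hc : f ^ (a + b - n) ∣ c) (hcd : c.degree < ((b * f.natDegree : ℕ) : WithBot ℕ))
    (hc' : f ^ (a' + b' - n) ∣ c') (hcd' : c'.degree < ((b' * f.natDegree : ℕ) : WithBot ℕ))
    (h : stdMod f n a b c = stdMod f n a' b' c') : a = a' ∧ b = b' ∧ c = c' := by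
  have hf0 := hirr.ne_zero
  have haa : a = a' := span_pow_injective hirr ha ha'
    (by rw [← map_fst_stdMod a b c, h, map_fst_stdMod])
  subst haa
  have hbb : b = b' := span_pow_injective hirr hb hb'
    (by rw [← comap_inr_stdMod hf0 ha hb hc, h, comap_inr_stdMod hf0 ha hb' hc'])
  subst hbb
  have hmem : ((π (f ^ a) : R), π c) ∈ stdMod f n a b c' := by
    rw [← h]; exact Submodule.subset_span (by simp [stdMod])
  have hdvd := sub_dvd_of_mem_stdMod hf0 ha hb hc' hmem
  have hdeg : (c - c').degree < (f ^ b).degree := by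
    rw [degree_pow_monic hmon]
    exact lt_of_le_of_lt (degree_sub_le _ _) (max_lt hcd hcd')
  have h0 := Polynomial.eq_zero_of_dvd_of_degree_lt hdvd hdeg
  exact ⟨rfl, rfl, sub_eq_zero.mp h0⟩


theorem mul_div_cancel_dvd (hmon : f.Monic) {t : ℕ} {c : F[X]} (hdvd : f ^ t ∣ c) :
    f ^ t * (c /ₘ f ^ t) = c := by
  have h := modByMonic_add_div c (f ^ t)
  rwa [(modByMonic_eq_zero_iff_dvd (hmon.pow t)).mpr hdvd, zero_add] at h

theorem degree_mul_pow_lt (hmon : f.Monic) {t w : ℕ} {e : F[X]}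
    (he : e.degree < (w : WithBot ℕ)) :
    (f ^ t * e).degree < ((t * f.natDegree + w : ℕ) : WithBot ℕ) := by
  rcases eq_or_ne e 0 with rfl | h0
  · rw [mul_zero, degree_zero]; exact WithBot.bot_lt_coe _
  · rw [degree_eq_natDegree h0, Nat.cast_lt] at he
    rw [degree_mul, degree_pow_monic hmon t, degree_eq_natDegree h0,
      ← Nat.cast_add, Nat.cast_lt]
    omega

theorem degree_div_lt' (hmon : f.Monic) {t w : ℕ} {c : F[X]} (hdvd : f ^ t ∣ c)
    (hc : c.degree < ((t * f.natDegree + w : ℕ) : WithBot ℕ)) :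
    (c /ₘ f ^ t).degree < (w : WithBot ℕ) := by
  rcases eq_or_ne (c /ₘ f ^ t) 0 with h0 | h0
  · rw [h0]; exact (WithBot.bot_lt_coe _)
  · have hc' := mul_div_cancel_dvd hmon hdvd
    rw [← hc', degree_mul, degree_pow_monic hmon t, degree_eq_natDegree h0,
      ← Nat.cast_add, Nat.cast_lt] at hc
    rw [degree_eq_natDegree h0, Nat.cast_lt]
    omega

/-- The set of `c` with `f^t ∣ c` and `degree c < b*d` is equivalent to
polynomials of degree `< (b-t)*d`. -/
noncomputable def cSetEquiv (hmon : f.Monic) {t b : ℕ} (htb : t ≤ b) :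
    {c : F[X] // f ^ t ∣ c ∧ c.degree < ((b * f.natDegree : ℕ) : WithBot ℕ)} ≃
      {e : F[X] // e.degree < (((b - t) * f.natDegree : ℕ) : WithBot ℕ)} where
  toFun c := ⟨c.1 /ₘ f ^ t, by
    obtain ⟨c, hdvd, hdeg⟩ := c
    refine degree_div_lt' hmon hdvd ?_
    have : t * f.natDegree + (b - t) * f.natDegree = b * f.natDegree := by
      rw [← add_mul]; congr 1; omega
    rwa [this]⟩
  invFun e := ⟨f ^ t * e.1, ⟨e.1, rfl⟩, by
    obtain ⟨e, he⟩ := e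
    have := degree_mul_pow_lt hmon (t := t) he
    have heq : t * f.natDegree + (b - t) * f.natDegree = b * f.natDegree := by
      rw [← add_mul]; congr 1; omega
    rwa [heq] at this⟩
  left_inv c := by
    obtain ⟨c, hdvd, hdeg⟩ := c
    simp only [Subtype.mk.injEq]
    exact mul_div_cancel_dvd hmon hdvd
  right_inv e := by
    obtain ⟨e, he⟩ := e
    simp only [Subtype.mk.injEq]
    rcases eq_or_ne (f ^ t) 0 with h | h
    · exact absurd h (hmon.pow t).ne_zero
    · exact mul_divByMonic_cancel_left e (hmon.pow t)


open Finset
theorem geom_sum_aux (Q n : ℕ) :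
    ∑ a ∈ range (n + 1), ∑ b ∈ range (n + 1), Q ^ min a b =
      ∑ k ∈ range (n + 1), (2 * (n - k) + 1) * Q ^ k := by
  induction n with
  | zero => simp
  | succ n ih =>
    have hL : ∑ a ∈ range (n + 2), ∑ b ∈ range (n + 2), Q ^ min a b =
        (∑ a ∈ range (n + 1), ∑ b ∈ range (n + 1), Q ^ min a b) +
          (2 * ∑ k ∈ range (n + 1), Q ^ k + Q ^ (n + 1)) := by
      rw [sum_range_succ]
      have h1 : ∀ a ∈ range (n + 1),
          ∑ b ∈ range (n + 2), Q ^ min a b =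
            (∑ b ∈ range (n + 1), Q ^ min a b) + Q ^ a := by
        intro a ha
        rw [sum_range_succ]
        congr 2
        rw [mem_range] at ha
        omega
      rw [sum_congr rfl h1, sum_add_distrib]
      have h2 : ∑ b ∈ range (n + 2), Q ^ min (n + 1) b =
          (∑ b ∈ range (n + 1), Q ^ b) + Q ^ (n + 1) := by
        rw [sum_range_succ]
        congr 1
        · apply sum_congr rfl
          intro b hb
          rw [mem_range] at hb
          congr 1
          omega
        · simp
      rw [h2]
      ring
    have hR : ∑ k ∈ range (n + 2), (2 * (n + 1 - k) + 1) * Q ^ k =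
        (∑ k ∈ range (n + 1), (2 * (n - k) + 1) * Q ^ k) +
          (2 * ∑ k ∈ range (n + 1), Q ^ k + Q ^ (n + 1)) := by
      rw [sum_range_succ]
      have h1 : ∀ k ∈ range (n + 1),
          (2 * (n + 1 - k) + 1) * Q ^ k = (2 * (n - k) + 1) * Q ^ k + 2 * Q ^ k := by
        intro k hk
        rw [mem_range] at hk
        have : 2 * (n + 1 - k) + 1 = (2 * (n - k) + 1) + 2 := by omega
        rw [this, add_mul]
      rw [sum_congr rfl h1, sum_add_distrib, mul_sum]
      have : 2 * (n + 1 - (n + 1)) + 1 = 1 := by omega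
      rw [this, one_mul]
      ring
    rw [hL, hR, ih]

theorem sum_min_eq (Q n : ℕ) :
    ∑ a ∈ range (n + 1), ∑ b ∈ range (n + 1), Q ^ (b - (a + b - n)) =
      ∑ j ∈ range (n + 1), (2 * j + 1) * Q ^ (n - j) := by
  have hrefl := Finset.sum_range_reflect
    (fun a => ∑ b ∈ range (n + 1), Q ^ (b - (a + b - n))) (n + 1)
  simp only [Nat.add_sub_cancel] at hrefl
  rw [← hrefl]
  have h1 : ∀ a ∈ range (n + 1), ∑ b ∈ range (n + 1), Q ^ (b - (n - a + b - n)) =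
      ∑ b ∈ range (n + 1), Q ^ min a b := by
    intro a ha
    rw [mem_range] at ha
    apply sum_congr rfl
    intro b _
    congr 1
    omega
  rw [sum_congr rfl h1, geom_sum_aux]
  have h2 := Finset.sum_range_reflect (fun k => (2 * (n - k) + 1) * Q ^ k) (n + 1)
  simp only [Nat.add_sub_cancel] at h2
  rw [← h2]
  apply sum_congr rfl
  intro j hj
  rw [mem_range] at hj
  congr 2
  omega



end Stmt11Aux

/-- Parameter space for submodules of `R²`. -/
def Stmt11Aux.ParamT (F : Type) [Field F] (f : F[X]) (n : ℕ) : Type :=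
  Σ _a : Fin (n + 1), Σ b : Fin (n + 1),
    {c : F[X] // f ^ (_a.1 + b.1 - n) ∣ c ∧
      c.degree < ((b.1 * f.natDegree : ℕ) : WithBot ℕ)}

namespace Stmt11Aux

variable {F : Type} [Field F] {f : F[X]} {n : ℕ}

local notation "π" => Ideal.Quotient.mk (Ideal.span {f ^ n})
local notation "R" => F[X] ⧸ Ideal.span ({f ^ n} : Set F[X])

theorem card_submodules (hmon : f.Monic) (hirr : Irreducible f) [Fintype F] :
    Nat.card (Submodule R (R × R)) =
      ∑ a ∈ Finset.range (n + 1), ∑ b ∈ Finset.range (n + 1),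
        (Fintype.card F) ^ ((b - (a + b - n)) * f.natDegree) := by
  classical
  have hbij : Function.Bijective
      (fun x : ParamT F f n => stdMod f n x.1.1 x.2.1.1 x.2.2.1) := by
    constructor
    · rintro ⟨a, b, c, hc1, hc2⟩ ⟨a', b', c', hc1', hc2'⟩ hEq
      simp only at hEq
      have ha : (a : ℕ) ≤ n := Nat.lt_succ_iff.mp a.isLt
      have hb : (b : ℕ) ≤ n := Nat.lt_succ_iff.mp b.isLt
      have ha' : (a' : ℕ) ≤ n := Nat.lt_succ_iff.mp a'.isLt
      have hb' : (b' : ℕ) ≤ n := Nat.lt_succ_iff.mp b'.isLt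
      obtain ⟨h1, h2, h3⟩ := params_inj hmon hirr ha hb ha' hb' hc1 hc2 hc1' hc2' hEq
      have ha2 : a = a' := Fin.ext h1
      have hb2 : b = b' := Fin.ext h2
      subst ha2; subst hb2; subst h3
      rfl
    · intro M
      obtain ⟨a, ha, b, hb, c, hc1, hc2, hM⟩ := exists_params hmon hirr M
      exact ⟨⟨⟨a, by omega⟩, ⟨b, by omega⟩, ⟨c, hc1, hc2⟩⟩, hM.symm⟩
  rw [← Nat.card_eq_of_bijective _ hbij]
  have E : ParamT F f n ≃ Σ a : Fin (n + 1), Σ b : Fin (n + 1),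
      (Fin ((b.1 - (a.1 + b.1 - n)) * f.natDegree) → F) :=
    Equiv.sigmaCongrRight (fun a => Equiv.sigmaCongrRight (fun b =>
      ((cSetEquiv hmon (show a.1 + b.1 - n ≤ b.1 by
          have := Nat.lt_succ_iff.mp a.isLt; omega)).trans
        ((Equiv.subtypeEquivRight (fun e => (Polynomial.mem_degreeLT).symm)).trans
          (Polynomial.degreeLTEquiv F _).toEquiv))))
  rw [Nat.card_congr E, Nat.card_eq_fintype_card, Fintype.card_sigma]
  rw [← Fin.sum_univ_eq_sum_range (fun a => ∑ b ∈ Finset.range (n + 1),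
    (Fintype.card F) ^ ((b - (a + b - n)) * f.natDegree)) (n + 1)]
  apply Finset.sum_congr rfl
  intro a _
  rw [Fintype.card_sigma]
  rw [← Fin.sum_univ_eq_sum_range (fun b => (Fintype.card F) ^ ((b - ((a : ℕ) + b - n)) * f.natDegree)) (n + 1)]
  apply Finset.sum_congr rfl
  intro b _
  rw [Fintype.card_fun, Fintype.card_fin]

end Stmt11Aux

set_option synthInstance.maxHeartbeats 1000000 in
theorem stmt_11 (p m s : ℕ) (hp : p.Prime) (hm : 0 < m) (hs : 0 < s)
    (F : Type) [Field F] [Fintype F] (hF : Fintype.card F = p ^ m)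
    (f : F[X]) (hmon : f.Monic) (hirr : Irreducible f) (d : ℕ) (hd : f.natDegree = d) :
    Nat.card (Submodule (F[X] ⧸ Ideal.span {f ^ p ^ s})
        ((F[X] ⧸ Ideal.span {f ^ p ^ s}) × (F[X] ⧸ Ideal.span {f ^ p ^ s}))) =
      ∑ j ∈ Finset.range (p ^ s + 1), (2 * j + 1) * p ^ (m * (p ^ s - j) * d) := by
  subst hd
  rw [Stmt11Aux.card_submodules hmon hirr (n := p ^ s)]
  rw [hF]
  have h1 : ∀ a ∈ Finset.range (p ^ s + 1), ∀ b ∈ Finset.range (p ^ s + 1),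
      (p ^ m) ^ ((b - (a + b - p ^ s)) * f.natDegree) =
        (p ^ (m * f.natDegree)) ^ (b - (a + b - p ^ s)) := by
    intro a _ b _
    rw [← pow_mul, ← pow_mul]
    congr 1
    ring
  rw [Finset.sum_congr rfl (fun a ha => Finset.sum_congr rfl (h1 a ha))]
  rw [Stmt11Aux.sum_min_eq (p ^ (m * f.natDegree)) (p ^ s)]
  apply Finset.sum_congr rfl
  intro j _
  congr 1
  rw [← pow_mul]
  congr 1
  ring
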